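/- Let A be a symmetric positive semidefinite n×n real matrix, let λ > 0, and let P be an orthogonal projection satisfying P ⪯ 4λ·(A + λI)^{−1}. Define A' = (I + P)·A·(I + P). Then: (i) Tr(A') ≤ 5·Tr(A); and (ii) for every p ≥ 1, ‖A'‖_p ≤ ‖A‖_p + 12·λ·(2·Tr(A)/λ)^{1/p}. -/

import Mathlib

/-- The `p`-th Schatten-type norm `‖A‖_p = (∑ᵢ |λᵢ|^p)^{1/p}` of a symmetric matrix,
where `λᵢ` are its eigenvalues (junk value `0` if `A` is not symmetric). -/
noncomputable def pNorm {n : ℕ} (A : Matrix (Fin n) (Fin n) ℝ) (p : ℝ) : ℝ :=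
  if hA : A.IsHermitian then (∑ i, |hA.eigenvalues i| ^ p) ^ (1 / p) else 0

section Aux

open Polynomial Matrix Module

variable {n : ℕ}

open Polynomial Matrix

variable {n : ℕ}

lemma charmatrix_zero' : charmatrix (0 : Matrix (Fin n) (Fin n) ℝ)
    = diagonal (fun _ => (X : ℝ[X])) := by
  rw [charmatrix]
  simp only [map_zero, RingHom.mapMatrix_apply, Matrix.map_zero, sub_zero, scalar_apply]

lemma charpoly_zero' : (0 : Matrix (Fin n) (Fin n) ℝ).charpoly = X ^ n := by
  rw [charpoly, charmatrix_zero', det_diagonal, Finset.prod_const, Finset.card_univ,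
    Fintype.card_fin]

lemma charpoly_mul_comm' (A B : Matrix (Fin n) (Fin n) ℝ) :
    (A * B).charpoly = (B * A).charpoly := by
  classical
  set X₁ : Matrix (Fin n ⊕ Fin n) (Fin n ⊕ Fin n) ℝ := fromBlocks (A*B) 0 B 0 with hX1
  set X₂ : Matrix (Fin n ⊕ Fin n) (Fin n ⊕ Fin n) ℝ := fromBlocks 0 0 B (B*A) with hX2
  set E : Matrix (Fin n ⊕ Fin n) (Fin n ⊕ Fin n) ℝ[X] :=
    fromBlocks 1 (-(A.map C)) 0 1 with hE
  have hdetE : E.det = 1 := by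
    rw [hE, det_fromBlocks_zero₂₁]; simp
  have hmap : (A * B).map (C : ℝ →+* ℝ[X]) = A.map C * B.map C := Matrix.map_mul
  have hmap2 : (B * A).map (C : ℝ →+* ℝ[X]) = B.map C * A.map C := Matrix.map_mul
  have c1 : ∀ M : Matrix (Fin n) (Fin n) ℝ[X], M * (diagonal fun _ => X)
      = (diagonal fun _ => X) * M := fun M =>
    Matrix.ext fun i j => by simp only [Matrix.mul_diagonal, Matrix.diagonal_mul]; ring
  have key : E * charmatrix X₁ = charmatrix X₂ * E := by
    rw [hX1, hX2, charmatrix_fromBlocks, charmatrix_fromBlocks, hE]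
    rw [fromBlocks_multiply, fromBlocks_multiply]
    simp only [one_mul, zero_mul, mul_zero, mul_one, add_zero, zero_add, neg_mul, mul_neg,
      neg_neg, Matrix.map_zero _ Polynomial.C_0, neg_zero, charmatrix_zero', charmatrix,
      RingHom.mapMatrix_apply, scalar_apply, hmap, hmap2]
    rw [Matrix.fromBlocks_inj]
    refine ⟨by abel, by rw [sub_zero, c1], by rfl, by abel⟩
  have hdet : X₁.charpoly = X₂.charpoly := by
    have := congrArg Matrix.det key
    rw [det_mul, det_mul, hdetE, one_mul, mul_one] at this
    exact this
  rw [hX1, hX2, charpoly_fromBlocks_zero₁₂, charpoly_fromBlocks_zero₁₂, charpoly_zero'] at hdet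
  have hXn : (X : ℝ[X]) ^ n ≠ 0 := pow_ne_zero _ X_ne_zero
  rw [mul_comm] at hdet
  exact mul_left_cancel₀ hXn hdet




lemma scalarX_commute (M : Matrix (Fin n) (Fin n) ℝ[X]) :
    M * (diagonal fun _ => X) = (diagonal fun _ => X) * M :=
  Matrix.ext fun i j => by simp only [Matrix.mul_diagonal, Matrix.diagonal_mul]; ring

lemma charpoly_unitary_conj (U : Matrix.unitaryGroup (Fin n) ℝ)
    (M : Matrix (Fin n) (Fin n) ℝ) :
    ((U : Matrix (Fin n) (Fin n) ℝ) * M * star (U : Matrix (Fin n) (Fin n) ℝ)).charpoly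
      = M.charpoly := by
  set u : Matrix (Fin n) (Fin n) ℝ := (U : Matrix (Fin n) (Fin n) ℝ)
  have huu : u * star u = 1 := Matrix.mem_unitaryGroup_iff.mp U.2
  have hmap : ∀ (P Q : Matrix (Fin n) (Fin n) ℝ), (P * Q).map (C : ℝ →+* ℝ[X])
      = P.map C * Q.map C := fun P Q => Matrix.map_mul
  have e1 : u.map (C : ℝ →+* ℝ[X]) * (diagonal fun _ => (X : ℝ[X])) * (star u).map C
      = diagonal fun _ => (X : ℝ[X]) := by
    rw [scalarX_commute (u.map C), Matrix.mul_assoc, ← hmap, huu,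
      Matrix.map_one C (map_zero C) (map_one C), Matrix.mul_one]
  have h1 : charmatrix (u * M * star u) = u.map C * charmatrix M * (star u).map C := by
    rw [charmatrix, charmatrix]
    simp only [RingHom.mapMatrix_apply, scalar_apply]
    rw [Matrix.mul_sub, Matrix.sub_mul, e1, hmap, hmap]
  have hdets := congrArg Matrix.det h1
  rw [det_mul, det_mul] at hdets
  have hd : (u.map (C : ℝ →+* ℝ[X])).det * ((star u).map C).det = 1 := by
    rw [← det_mul, ← hmap, huu, Matrix.map_one C (map_zero C) (map_one C), det_one]
  rw [charpoly, charpoly, hdets]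
  calc (u.map (C : ℝ →+* ℝ[X])).det * (charmatrix M).det * ((star u).map C).det
      = (u.map (C : ℝ →+* ℝ[X])).det * ((star u).map C).det * (charmatrix M).det := by ring
    _ = (charmatrix M).det := by rw [hd, one_mul]

lemma charpoly_diagonal' (d : Fin n → ℝ) :
    (diagonal d).charpoly = ∏ i, (X - C (d i)) := by
  have : charmatrix (diagonal d) = diagonal (fun i => X - C (d i)) := by
    ext i j
    by_cases h : i = j
    · subst h; simp
    · simp [h, charmatrix_apply_ne _ _ _ h, diagonal_apply_ne _ h]
  rw [charpoly, this, det_diagonal]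

lemma charpoly_isHermitian_eq {X' : Matrix (Fin n) (Fin n) ℝ} (hX : X'.IsHermitian) :
    X'.charpoly = ((Multiset.map hX.eigenvalues Finset.univ.val).map
      (fun μ => X - C μ)).prod := by
  conv_lhs => rw [hX.spectral_theorem, Unitary.conjStarAlgAut_apply]
  rw [charpoly_unitary_conj hX.eigenvectorUnitary]
  have : (RCLike.ofReal ∘ hX.eigenvalues : Fin n → ℝ) = hX.eigenvalues := by
    funext i; simp [RCLike.ofReal]
  rw [this, charpoly_diagonal']
  rw [Multiset.map_map]
  rw [Finset.prod_eq_multiset_prod]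
  rfl

lemma eig_multiset_roots {X' : Matrix (Fin n) (Fin n) ℝ} (hX : X'.IsHermitian) :
    X'.charpoly.roots = Multiset.map hX.eigenvalues Finset.univ.val := by
  rw [charpoly_isHermitian_eq hX, roots_multiset_prod_X_sub_C]

lemma eig_multiset_eq {X' Y' : Matrix (Fin n) (Fin n) ℝ} (hX : X'.IsHermitian)
    (hY : Y'.IsHermitian) (h : X'.charpoly = Y'.charpoly) :
    Multiset.map hX.eigenvalues Finset.univ.val
      = Multiset.map hY.eigenvalues Finset.univ.val := by
  rw [← eig_multiset_roots hX, ← eig_multiset_roots hY, h]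




section Evec

variable {X : Matrix (Fin n) (Fin n) ℝ}

lemma sum_dotProduct' {ι : Type*} (s : Finset ι) (f : ι → Fin n → ℝ) (w : Fin n → ℝ) :
    (∑ i ∈ s, f i) ⬝ᵥ w = ∑ i ∈ s, f i ⬝ᵥ w := by
  simp only [dotProduct, Finset.sum_apply, Finset.sum_mul]
  exact Finset.sum_comm

lemma dotProduct_sum' {ι : Type*} (s : Finset ι) (w : Fin n → ℝ) (f : ι → Fin n → ℝ) :
    w ⬝ᵥ (∑ i ∈ s, f i) = ∑ i ∈ s, w ⬝ᵥ f i := by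
  simp only [dotProduct, Finset.sum_apply, Finset.mul_sum]
  exact Finset.sum_comm

/-- the columns of the eigenvector unitary, as plain vectors -/
noncomputable def evec (hX : X.IsHermitian) (i : Fin n) : Fin n → ℝ :=
  fun j => (hX.eigenvectorUnitary : Matrix (Fin n) (Fin n) ℝ) j i

lemma evec_dot (hX : X.IsHermitian) (i j : Fin n) :
    evec hX i ⬝ᵥ evec hX j = if i = j then 1 else 0 := by
  have h1 : star (hX.eigenvectorUnitary : Matrix (Fin n) (Fin n) ℝ)
      * (hX.eigenvectorUnitary : Matrix (Fin n) (Fin n) ℝ) = 1 :=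
    Matrix.mem_unitaryGroup_iff'.mp hX.eigenvectorUnitary.2
  have h2 := congrFun (congrFun h1 i) j
  simp only [Matrix.mul_apply, Matrix.conjTranspose_apply, star_trivial,
    Matrix.one_apply, star_eq_conjTranspose] at h2
  simpa [evec, dotProduct] using h2

lemma evec_mulVec (hX : X.IsHermitian) (i : Fin n) :
    X *ᵥ evec hX i = hX.eigenvalues i • evec hX i := by
  have : evec hX i = ⇑(hX.eigenvectorBasis i) := by
    funext j; simp [evec, Matrix.IsHermitian.eigenvectorUnitary_apply]
  rw [this]
  exact hX.mulVec_eigenvectorBasis i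

lemma evec_li (hX : X.IsHermitian) : LinearIndependent ℝ (evec hX) := by
  rw [linearIndependent_iff']
  intro s g hsum j hj
  have := congrArg (fun w => w ⬝ᵥ evec hX j) hsum
  simp only [sum_dotProduct', smul_dotProduct, evec_dot, smul_eq_mul,
    mul_ite, mul_one, mul_zero, Finset.sum_ite_eq', zero_dotProduct] at this
  rw [if_pos hj] at this
  exact this

lemma dot_sum_sum (hX : X.IsHermitian) (S : Finset (Fin n)) (a b : {i // i ∈ S} → ℝ) :
    (∑ i : {i // i ∈ S}, a i • evec hX i.1) ⬝ᵥ (∑ j : {i // i ∈ S}, b j • evec hX j.1)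
      = ∑ i : {i // i ∈ S}, a i * b i := by
  rw [sum_dotProduct']
  refine Finset.sum_congr rfl fun i _ => ?_
  rw [smul_dotProduct, dotProduct_sum']
  simp only [dotProduct_smul, evec_dot, smul_eq_mul]
  have : ∀ j : {i // i ∈ S}, (i.1 = j.1) = (j = i) := by
    intro j; exact propext ⟨fun h => Subtype.ext h.symm, fun h => congrArg Subtype.val h.symm⟩
  simp only [mul_ite, mul_one, mul_zero, this]
  rw [Finset.sum_ite_eq' Finset.univ i (fun j => b j)]
  simp

lemma dot_repr (hX : X.IsHermitian) (S : Finset (Fin n)) (c : {i // i ∈ S} → ℝ)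
    (x : Fin n → ℝ) (hx : x = ∑ i : {i // i ∈ S}, c i • evec hX i.1) :
    x ⬝ᵥ x = ∑ i : {i // i ∈ S}, (c i)^2 ∧
    x ⬝ᵥ (X *ᵥ x) = ∑ i : {i // i ∈ S}, hX.eigenvalues i.1 * (c i)^2 := by
  have hXx : X *ᵥ x = ∑ i : {i // i ∈ S}, (c i * hX.eigenvalues i.1) • evec hX i.1 := by
    rw [hx, ← Matrix.mulVecLin_apply, map_sum]
    refine Finset.sum_congr rfl fun i _ => ?_
    rw [LinearMap.map_smul, Matrix.mulVecLin_apply, evec_mulVec, smul_smul]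
  constructor
  · rw [hx, dot_sum_sum]
    exact Finset.sum_congr rfl fun i _ => by ring
  · rw [hXx, hx, dot_sum_sum]
    exact Finset.sum_congr rfl fun i _ => by ring

end Evec




section Evec2
variable {X : Matrix (Fin n) (Fin n) ℝ}

noncomputable def espan (hX : X.IsHermitian) (S : Finset (Fin n)) :
    Submodule ℝ (Fin n → ℝ) :=
  Submodule.span ℝ (Set.range (fun i : {i // i ∈ S} => evec hX i.1))

lemma espan_finrank (hX : X.IsHermitian) (S : Finset (Fin n)) :
    Module.finrank ℝ (espan hX S) = S.card := by
  have li : LinearIndependent ℝ (fun i : {i // i ∈ S} => evec hX i.1) :=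
    (evec_li hX).comp Subtype.val Subtype.val_injective
  rw [espan, finrank_span_eq_card li, Fintype.card_coe]

lemma espan_rayleigh_le (hX : X.IsHermitian) (S : Finset (Fin n)) (t : ℝ)
    (h : ∀ i ∈ S, hX.eigenvalues i ≤ t) {x : Fin n → ℝ} (hx : x ∈ espan hX S) :
    x ⬝ᵥ (X *ᵥ x) ≤ t * (x ⬝ᵥ x) := by
  obtain ⟨c, hc⟩ := Submodule.mem_span_range_iff_exists_fun ℝ |>.mp hx
  obtain ⟨h1, h2⟩ := dot_repr hX S c x hc.symm
  rw [h1, h2, Finset.mul_sum]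
  exact Finset.sum_le_sum fun i _ =>
    mul_le_mul_of_nonneg_right (h i.1 i.2) (sq_nonneg _)

lemma espan_rayleigh_ge (hX : X.IsHermitian) (S : Finset (Fin n)) (t : ℝ)
    (h : ∀ i ∈ S, t ≤ hX.eigenvalues i) {x : Fin n → ℝ} (hx : x ∈ espan hX S) :
    t * (x ⬝ᵥ x) ≤ x ⬝ᵥ (X *ᵥ x) := by
  obtain ⟨c, hc⟩ := Submodule.mem_span_range_iff_exists_fun ℝ |>.mp hx
  obtain ⟨h1, h2⟩ := dot_repr hX S c x hc.symm
  rw [h1, h2, Finset.mul_sum]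
  exact Finset.sum_le_sum fun i _ =>
    mul_le_mul_of_nonneg_right (h i.1 i.2) (sq_nonneg _)

end Evec2

lemma exists_nonzero_mem_inf {W1 W2 : Submodule ℝ (Fin n → ℝ)}
    (h : n < finrank ℝ W1 + finrank ℝ W2) :
    ∃ x : Fin n → ℝ, x ∈ W1 ⊓ W2 ∧ x ≠ 0 := by
  have hfin : finrank ℝ (Fin n → ℝ) = n := by simp
  have hsup : finrank ℝ ↥(W1 ⊔ W2) ≤ n := by
    have := Submodule.finrank_le (W1 ⊔ W2)
    rwa [hfin] at this
  have := Submodule.finrank_sup_add_finrank_inf_eq W1 W2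
  have hpos : 0 < finrank ℝ ↥(W1 ⊓ W2) := by omega
  have hne : W1 ⊓ W2 ≠ ⊥ := by
    intro hbot
    rw [hbot, finrank_bot] at hpos
    exact lt_irrefl 0 hpos
  obtain ⟨x, hx, hx0⟩ := Submodule.exists_mem_ne_zero_of_ne_bot hne
  exact ⟨x, hx, hx0⟩

lemma eigenvalues_mono_of_posSemidef {X Y : Matrix (Fin n) (Fin n) ℝ}
    (hX : X.IsHermitian) (hY : Y.IsHermitian) (hXY : (Y - X).PosSemidef)
    {σ τ : Equiv.Perm (Fin n)} (hσ : Monotone (hX.eigenvalues ∘ σ))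
    (hτ : Monotone (hY.eigenvalues ∘ τ)) (k : Fin n) :
    hX.eigenvalues (σ k) ≤ hY.eigenvalues (τ k) := by
  set S1 : Finset (Fin n) := (Finset.Ici k).image σ with hS1
  set S2 : Finset (Fin n) := (Finset.Iic k).image τ with hS2
  have hc1 : S1.card = n - (k : ℕ) := by
    rw [hS1, Finset.card_image_of_injective _ σ.injective, Fin.card_Ici]
  have hc2 : S2.card = (k : ℕ) + 1 := by
    rw [hS2, Finset.card_image_of_injective _ τ.injective, Fin.card_Iic]
  have hcard : n < finrank ℝ (espan hX S1) + finrank ℝ (espan hY S2) := by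
    rw [espan_finrank, espan_finrank, hc1, hc2]
    have := k.isLt
    omega
  obtain ⟨x, ⟨hx1, hx2⟩, hx0⟩ := exists_nonzero_mem_inf hcard
  have hXle : hX.eigenvalues (σ k) * (x ⬝ᵥ x) ≤ x ⬝ᵥ (X *ᵥ x) := by
    refine espan_rayleigh_ge hX S1 _ ?_ hx1
    rintro i hi
    rw [hS1, Finset.mem_image] at hi
    obtain ⟨i', hi', rfl⟩ := hi
    exact hσ (Finset.mem_Ici.mp hi')
  have hYge : x ⬝ᵥ (Y *ᵥ x) ≤ hY.eigenvalues (τ k) * (x ⬝ᵥ x) := by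
    refine espan_rayleigh_le hY S2 _ ?_ hx2
    rintro i hi
    rw [hS2, Finset.mem_image] at hi
    obtain ⟨i', hi', rfl⟩ := hi
    exact hτ (Finset.mem_Iic.mp hi')
  have hmid : x ⬝ᵥ (X *ᵥ x) ≤ x ⬝ᵥ (Y *ᵥ x) := by
    have := hXY.dotProduct_mulVec_nonneg x
    rw [star_trivial, Matrix.sub_mulVec, dotProduct_sub] at this
    linarith
  have hxx : 0 < x ⬝ᵥ x := by
    rcases lt_or_eq_of_le (Finset.sum_nonneg fun i _ => mul_self_nonneg (x i)) with h | h
    · exact h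
    · exact absurd (dotProduct_self_eq_zero.mp h.symm) hx0
  have := le_trans hXle (le_trans hmid hYge)
  exact le_of_mul_le_mul_right this hxx


end Aux

open Polynomial Matrix




/-- trace of a PSD matrix is nonneg -/
lemma psd_trace_nonneg {X : Matrix (Fin n) (Fin n) ℝ} (hX : X.PosSemidef) :
    0 ≤ X.trace := by
  refine Finset.sum_nonneg fun i _ => ?_
  have := hX.dotProduct_mulVec_nonneg (Pi.single i 1)
  rw [star_trivial] at this
  rw [show (X.diag i) = Pi.single i 1 ⬝ᵥ (X *ᵥ Pi.single i 1) by
    simp [dotProduct, Matrix.mulVec_single, Pi.single_apply]]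
  exact this

lemma psd_smul {X : Matrix (Fin n) (Fin n) ℝ} (hX : X.PosSemidef) {c : ℝ} (hc : 0 ≤ c) :
    (c • X).PosSemidef := by
  refine Matrix.PosSemidef.of_dotProduct_mulVec_nonneg ?_ ?_
  · rw [Matrix.IsHermitian, Matrix.conjTranspose_smul, star_trivial, hX.1]
  · intro x
    rw [Matrix.smul_mulVec, dotProduct_smul, smul_eq_mul]
    exact mul_nonneg hc (hX.dotProduct_mulVec_nonneg x)

lemma sum_comp_of_multiset_eq {f g : Fin n → ℝ}
    (h : Multiset.map f Finset.univ.val = Multiset.map g Finset.univ.val)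
    (F : ℝ → ℝ) : ∑ i, F (f i) = ∑ i, F (g i) := by
  have : ∀ f' : Fin n → ℝ, ∑ i, F (f' i) = ((Multiset.map f' Finset.univ.val).map F).sum := by
    intro f'
    rw [Multiset.map_map, Finset.sum]
    rfl
  rw [this f, this g, h]

set_option maxHeartbeats 1000000

/-- Let `A` be symmetric positive semidefinite, `λ > 0`, and `P` an orthogonal projection
with `P ⪯ 4λ(A + λI)⁻¹`.  Then `A' = (I+P)A(I+P)` satisfies (i) `Tr(A') ≤ 5·Tr(A)` and
(ii) `‖A'‖_p ≤ ‖A‖_p + 12λ(2·Tr(A)/λ)^{1/p}` for every `p ≥ 1`. -/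
theorem isotropize_step_norm_growth {n : ℕ} (A : Matrix (Fin n) (Fin n) ℝ)
    (hA : A.PosSemidef) (lam : ℝ) (hlam : 0 < lam)
    (P : Matrix (Fin n) (Fin n) ℝ) (hP : P.IsHermitian) (hProj : P * P = P)
    (hPle : ((4 * lam) • (A + lam • (1 : Matrix (Fin n) (Fin n) ℝ))⁻¹ - P).PosSemidef) :
    ((1 + P) * A * (1 + P)).trace ≤ 5 * A.trace ∧
      ∀ p : ℝ, 1 ≤ p →
        pNorm ((1 + P) * A * (1 + P)) p ≤
          pNorm A p + 12 * lam * (2 * A.trace / lam) ^ (1 / p) := by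
  classical
  have hQ : (1 + P)ᴴ = (1 + P) := by
    rw [Matrix.conjTranspose_add, Matrix.conjTranspose_one, hP]
  have hA'psd : ((1 + P) * A * (1 + P)).PosSemidef := by
    have := hA.conjTranspose_mul_mul_same (1 + P)
    rwa [hQ] at this
  have htrA : 0 ≤ A.trace := psd_trace_nonneg hA
  have htrAP : (A * P).trace ≤ A.trace ∧ 0 ≤ (A * P).trace := by
    constructor
    · have h1 : ((1 - P) * A * (1 - P)).PosSemidef := by
        have := hA.conjTranspose_mul_mul_same (1 - P)
        rwa [Matrix.conjTranspose_sub, Matrix.conjTranspose_one, hP] at this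
      have h2 := psd_trace_nonneg h1
      have : (1 - P) * A * (1 - P) = A - P * A - (A * P - P * A * P) := by
        noncomm_ring
      rw [this] at h2
      simp only [Matrix.trace_sub] at h2
      rw [Matrix.trace_mul_comm P A] at h2
      have h3 : (P * A * P).trace = (A * P).trace := by
        rw [Matrix.trace_mul_comm (P * A) P, ← Matrix.mul_assoc, hProj,
          Matrix.trace_mul_comm P A]
      rw [h3] at h2
      linarith
    · have h1 : (P * A * P).PosSemidef := by
        have := hA.conjTranspose_mul_mul_same P
        rwa [hP] at this
      have h2 := psd_trace_nonneg h1
      have h3 : (P * A * P).trace = (A * P).trace := by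
        rw [Matrix.trace_mul_comm (P * A) P, ← Matrix.mul_assoc, hProj,
          Matrix.trace_mul_comm P A]
      rwa [h3] at h2
  have htrace : ((1 + P) * A * (1 + P)).trace ≤ 5 * A.trace := by
    have hexp : (1 + P) * A * (1 + P) = A + P * A + (A * P + P * A * P) := by
      noncomm_ring
    rw [hexp]
    simp only [Matrix.trace_add]
    have e1 : (P * A).trace = (A * P).trace := Matrix.trace_mul_comm P A
    have e2 : (P * A * P).trace = (A * P).trace := by
      rw [Matrix.trace_mul_comm (P * A) P, ← Matrix.mul_assoc, hProj,
        Matrix.trace_mul_comm P A]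
    rw [e1, e2]
    linarith [htrAP.1, htrAP.2]
  refine ⟨htrace, ?_⟩
  intro p hp
  have hp0 : 0 < p := lt_of_lt_of_le one_pos hp
  have hAH : A.IsHermitian := hA.1
  set ev : Fin n → ℝ := hAH.eigenvalues with hevdef
  have hev : ∀ i, 0 ≤ ev i := fun i => hA.eigenvalues_nonneg i
  set u : Matrix (Fin n) (Fin n) ℝ := (hAH.eigenvectorUnitary : Matrix (Fin n) (Fin n) ℝ)
    with hu
  have huu : u * star u = 1 := Matrix.mem_unitaryGroup_iff.mp hAH.eigenvectorUnitary.2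
  have hsu : star u * u = 1 := Matrix.mem_unitaryGroup_iff'.mp hAH.eigenvectorUnitary.2
  set cd : (Fin n → ℝ) → Matrix (Fin n) (Fin n) ℝ := fun d => u * diagonal d * star u
    with hcd
  have cdherm : ∀ d, (cd d).IsHermitian := by
    intro d
    rw [Matrix.IsHermitian, hcd]
    simp only [Matrix.conjTranspose_mul, Matrix.conjTranspose_conjTranspose,
      Matrix.diagonal_conjTranspose, star_trivial, Matrix.star_eq_conjTranspose,
      Matrix.mul_assoc]
  have cancel : ∀ Z : Matrix (Fin n) (Fin n) ℝ, star u * (u * Z) = Z := by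
    intro Z; rw [← Matrix.mul_assoc, hsu, Matrix.one_mul]
  have cdmul : ∀ d e, cd d * cd e = cd (fun i => d i * e i) := by
    intro d e
    simp only [hcd, Matrix.mul_assoc]
    rw [cancel, ← Matrix.mul_assoc (diagonal d) (diagonal e), diagonal_mul_diagonal]
  have cdadd : ∀ d e, cd d + cd e = cd (fun i => d i + e i) := by
    intro d e
    simp only [hcd]
    rw [← Matrix.add_mul, ← Matrix.mul_add, diagonal_add]
    try rfl
  have cdsmul : ∀ (c : ℝ) d, c • cd d = cd (fun i => c * d i) := by
    intro c d
    simp only [hcd]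
    rw [← Matrix.smul_mul, ← Matrix.mul_smul]
    congr 1
    rw [← Matrix.diagonal_smul]
    try rfl
  have cdone : cd (fun _ => 1) = 1 := by
    simp only [hcd]
    have hd1 : diagonal (fun _ : Fin n => (1:ℝ)) = 1 := by simp
    rw [hd1, Matrix.mul_one, huu]
  have hAspec : A = cd ev := by
    have h0 := hAH.spectral_theorem
    have h1 : (RCLike.ofReal ∘ hAH.eigenvalues : Fin n → ℝ) = ev := by
      funext i; simp [RCLike.ofReal]; rfl
    rw [h1, Unitary.conjStarAlgAut_apply] at h0
    exact h0
  have htr : A.trace = ∑ i, ev i := by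
    rw [hAspec]
    simp only [hcd]
    rw [Matrix.trace_mul_comm (u * diagonal ev) (star u), ← Matrix.mul_assoc, hsu,
      Matrix.one_mul, Matrix.trace_diagonal]
  set sq : Fin n → ℝ := fun i => Real.sqrt (ev i) with hsqdef
  set B := cd sq with hBdef
  have hBherm : B.IsHermitian := cdherm sq
  have hBB : B * B = A := by
    have hfn : (fun i => sq i * sq i) = ev := funext fun i => Real.mul_self_sqrt (hev i)
    rw [hBdef, cdmul, hfn, ← hAspec]
  set g : Fin n → ℝ := fun i => ev i / (ev i + lam) with hgdef
  have hevlam : ∀ i, 0 < ev i + lam := fun i => by have := hev i; linarith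
  have hinv : (A + lam • (1 : Matrix (Fin n) (Fin n) ℝ))⁻¹
      = cd (fun i => (ev i + lam)⁻¹) := by
    have hlam1 : lam • (1 : Matrix (Fin n) (Fin n) ℝ) = cd (fun _ => lam) := by
      rw [show (fun _ : Fin n => lam) = (fun i => lam * (fun _ : Fin n => (1:ℝ)) i) by
        funext i; ring, ← cdsmul, cdone]
    have hsum : A + lam • (1 : Matrix (Fin n) (Fin n) ℝ) = cd (fun i => ev i + lam) := by
      rw [hAspec, hlam1, cdadd]
    have hmul : cd (fun i => ev i + lam) * cd (fun i => (ev i + lam)⁻¹) = 1 := by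
      rw [cdmul, show (fun i => (ev i + lam) * (ev i + lam)⁻¹) = fun _ : Fin n => (1:ℝ)
        from funext fun i => mul_inv_cancel₀ (ne_of_gt (hevlam i)), cdone]
    rw [hsum]
    exact Matrix.inv_eq_right_inv hmul
  have hfn2 : (fun i => sq i * (ev i + lam)⁻¹ * sq i) = g := by
    funext i
    simp only [hsqdef, hgdef]
    rw [div_eq_mul_inv]
    calc Real.sqrt (ev i) * (ev i + lam)⁻¹ * Real.sqrt (ev i)
        = (Real.sqrt (ev i) * Real.sqrt (ev i)) * (ev i + lam)⁻¹ := by ring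
      _ = ev i * (ev i + lam)⁻¹ := by rw [Real.mul_self_sqrt (hev i)]
  have hBinvB : B * cd (fun i => (ev i + lam)⁻¹) * B = cd g := by
    rw [hBdef, cdmul, cdmul, hfn2]
  have hPpsd : P.PosSemidef := by
    have : P = Pᴴ * P := by rw [hP]; exact hProj.symm
    rw [this]
    exact Matrix.posSemidef_conjTranspose_mul_self P
  have hBPB : (B * P * B).PosSemidef := by
    have := hPpsd.mul_mul_conjTranspose_same B
    rwa [hBherm.eq] at this
  have hkey : ((4 * lam) • cd g - B * P * B).PosSemidef := by
    rw [hinv] at hPle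
    have hconj := hPle.mul_mul_conjTranspose_same B
    rw [hBherm.eq] at hconj
    have hexp : B * ((4 * lam) • cd (fun i => (ev i + lam)⁻¹) - P) * B
        = (4 * lam) • cd g - B * P * B := by
      rw [Matrix.mul_sub, Matrix.sub_mul, ← hBinvB]
      congr 1
      rw [Matrix.mul_smul, Matrix.smul_mul]
    rwa [hexp] at hconj
  set M := A + (3:ℝ) • (B * P * B) with hMdef
  have hMpsd : M.PosSemidef := hA.add (psd_smul hBPB (by norm_num))
  set hfun : Fin n → ℝ := fun i => ev i + 12 * lam * g i with hhfun
  set H := cd hfun with hHdef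
  have hHherm : H.IsHermitian := cdherm hfun
  have hHM : (H - M).PosSemidef := by
    have hHsplit : H = A + (12 * lam) • cd g := by
      rw [hHdef, hAspec, cdsmul, cdadd]
    have : H - M = (3:ℝ) • ((4 * lam) • cd g - B * P * B) := by
      rw [hHsplit, hMdef, smul_sub, smul_smul]
      rw [show (3:ℝ) * (4 * lam) = 12 * lam by ring]
      abel
    rw [this]
    exact psd_smul hkey (by norm_num)
  -- charpoly equality
  have hA'fact : (1 + P) * A * (1 + P) = ((1 + P) * B) * (B * (1 + P)) := by
    rw [← hBB]; noncomm_ring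
  have hMfact : M = (B * (1 + P)) * ((1 + P) * B) := by
    have hexp : (B * (1 + P)) * ((1 + P) * B)
        = B * B + B * (P * B) + B * P * B + B * (P * (P * B)) := by
      noncomm_ring
    have h3 : B * (P * (P * B)) = B * P * B := by
      rw [← Matrix.mul_assoc P P B, hProj, ← Matrix.mul_assoc B P B]
    have h4 : B * (P * B) = B * P * B := (Matrix.mul_assoc B P B).symm
    rw [hexp, h3, h4, hBB, hMdef]
    have : (3:ℝ) • (B * P * B) = B * P * B + B * P * B + B * P * B := by module
    rw [this]
    abel
  have hcheq : ((1 + P) * A * (1 + P)).charpoly = M.charpoly := by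
    rw [hA'fact, hMfact]
    exact charpoly_mul_comm' _ _
  have msetEq : Multiset.map hA'psd.1.eigenvalues Finset.univ.val
      = Multiset.map hMpsd.1.eigenvalues Finset.univ.val :=
    eig_multiset_eq hA'psd.1 hMpsd.1 hcheq
  have msetH : Multiset.map hHherm.eigenvalues Finset.univ.val
      = Multiset.map hfun Finset.univ.val := by
    have h2 : H.charpoly
        = ((Multiset.map hfun Finset.univ.val).map (fun μ => X - C μ)).prod := by
      rw [hHdef]
      show (u * diagonal hfun * star u).charpoly = _
      rw [hu, charpoly_unitary_conj hAH.eigenvectorUnitary (diagonal hfun),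
        charpoly_diagonal', Multiset.map_map, Finset.prod_eq_multiset_prod]
      rfl
    have h1 := eig_multiset_roots hHherm
    rw [h2, roots_multiset_prod_X_sub_C] at h1
    exact h1.symm
  -- scalar part
  have hevMnn : ∀ i, 0 ≤ hMpsd.1.eigenvalues i := fun i => hMpsd.eigenvalues_nonneg i
  have dom : ∀ k, hMpsd.1.eigenvalues (Tuple.sort hMpsd.1.eigenvalues k)
      ≤ hHherm.eigenvalues (Tuple.sort hHherm.eigenvalues k) :=
    eigenvalues_mono_of_posSemidef hMpsd.1 hHherm hHM
      (Tuple.monotone_sort hMpsd.1.eigenvalues) (Tuple.monotone_sort hHherm.eigenvalues)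
  have hgnn : ∀ i, 0 ≤ g i := fun i => div_nonneg (hev i) (le_of_lt (hevlam i))
  have hgle1 : ∀ i, g i ≤ 1 := by
    intro i
    rw [hgdef]
    exact div_le_one_of_le₀ (by linarith) (le_of_lt (hevlam i))
  have hddnn : ∀ i, 0 ≤ 12 * lam * g i :=
    fun i => mul_nonneg (by linarith) (hgnn i)
  have hddle : ∀ i, 12 * lam * g i ≤ 12 * lam := by
    intro i
    calc 12 * lam * g i ≤ 12 * lam * 1 :=
          mul_le_mul_of_nonneg_left (hgle1 i) (by linarith)
      _ = 12 * lam := by ring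
  have hddle2 : ∀ i, 12 * lam * g i ≤ 12 * ev i := by
    intro i
    have h2 : lam * ev i ≤ ev i * (ev i + lam) := by nlinarith [sq_nonneg (ev i), hev i]
    have h3 : lam * ev i / (ev i + lam) ≤ ev i := (div_le_iff₀ (hevlam i)).mpr h2
    have h4 : 12 * lam * g i = 12 * (lam * ev i / (ev i + lam)) := by
      rw [hgdef]; ring
    rw [h4]
    linarith
  have hfn_nn : ∀ i, 0 ≤ hfun i := by
    intro i
    rw [hhfun]
    have := hddnn i
    have := hev i
    simp only
    linarith
  have hpinv : (0:ℝ) ≤ 1 / p := by positivity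
  simp only [pNorm]
  rw [dif_pos hA'psd.1, dif_pos hAH]
  have s1 : ∑ i, |hA'psd.1.eigenvalues i| ^ p = ∑ i, |hMpsd.1.eigenvalues i| ^ p :=
    sum_comp_of_multiset_eq msetEq (fun t => |t| ^ p)
  have s2 : ∑ i, |hMpsd.1.eigenvalues i| ^ p ≤ ∑ i, (ev i + 12 * lam * g i) ^ p := by
    calc ∑ i, |hMpsd.1.eigenvalues i| ^ p
        = ∑ k, |hMpsd.1.eigenvalues (Tuple.sort hMpsd.1.eigenvalues k)| ^ p :=
          (Equiv.sum_comp (Tuple.sort hMpsd.1.eigenvalues)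
            (fun j => |hMpsd.1.eigenvalues j| ^ p)).symm
      _ ≤ ∑ k, |hHherm.eigenvalues (Tuple.sort hHherm.eigenvalues k)| ^ p := by
          refine Finset.sum_le_sum fun k _ => ?_
          have h1 := dom k
          have h2 := hevMnn (Tuple.sort hMpsd.1.eigenvalues k)
          rw [abs_of_nonneg h2, abs_of_nonneg (le_trans h2 h1)]
          exact Real.rpow_le_rpow h2 h1 (le_of_lt hp0)
      _ = ∑ i, |hHherm.eigenvalues i| ^ p :=
          Equiv.sum_comp (Tuple.sort hHherm.eigenvalues) (fun j => |hHherm.eigenvalues j| ^ p)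
      _ = ∑ i, |hfun i| ^ p := sum_comp_of_multiset_eq msetH (fun t => |t| ^ p)
      _ = ∑ i, (ev i + 12 * lam * g i) ^ p := by
          refine Finset.sum_congr rfl fun i _ => ?_
          rw [abs_of_nonneg (hfn_nn i), hhfun]
  have snn : 0 ≤ ∑ i, |hA'psd.1.eigenvalues i| ^ p :=
    Finset.sum_nonneg fun i _ => Real.rpow_nonneg (abs_nonneg _) p
  have step1 : (∑ i, |hA'psd.1.eigenvalues i| ^ p) ^ (1/p)
      ≤ (∑ i, (ev i + 12 * lam * g i) ^ p) ^ (1/p) :=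
    Real.rpow_le_rpow snn (by rw [s1]; exact s2) hpinv
  have mink := Real.Lp_add_le_of_nonneg (s := Finset.univ) (f := ev)
    (g := fun i => 12 * lam * g i) hp (fun i _ => hev i) (fun i _ => hddnn i)
  have eA : (∑ i, ev i ^ p) ^ (1/p) = (∑ i, |ev i| ^ p) ^ (1/p) := by
    congr 1
    exact Finset.sum_congr rfl fun i _ => by rw [abs_of_nonneg (hev i)]
  have htrnn : (0:ℝ) ≤ 2 * A.trace / lam :=
    div_nonneg (by linarith) (le_of_lt hlam)
  have dsum : ∑ i, (12 * lam * g i) ^ p ≤ (12*lam) ^ p * (2 * A.trace / lam) := by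
    have per : ∀ i, (12 * lam * g i) ^ p ≤ (12*lam) ^ (p-1) * (12 * ev i) := by
      intro i
      rcases eq_or_lt_of_le (hddnn i) with h0 | h0
      · rw [← h0, Real.zero_rpow (ne_of_gt hp0)]
        exact mul_nonneg (Real.rpow_nonneg (by linarith) _)
          (by have := hev i; linarith)
      · have hsplit : (12 * lam * g i) ^ p = (12 * lam * g i) ^ (p-1) * (12 * lam * g i) := by
          calc (12 * lam * g i) ^ p = (12 * lam * g i) ^ ((p-1) + 1) := by ring_nf
            _ = (12 * lam * g i) ^ (p-1) * (12 * lam * g i) ^ (1:ℝ) := Real.rpow_add h0 _ _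
            _ = (12 * lam * g i) ^ (p-1) * (12 * lam * g i) := by rw [Real.rpow_one]
        rw [hsplit]
        refine mul_le_mul ?_ (hddle2 i) (le_of_lt h0) (Real.rpow_nonneg (by linarith) _)
        exact Real.rpow_le_rpow (le_of_lt h0) (hddle i) (by linarith)
    calc ∑ i, (12 * lam * g i) ^ p ≤ ∑ i, (12*lam)^(p-1) * (12 * ev i) :=
          Finset.sum_le_sum fun i _ => per i
      _ = (12*lam)^(p-1) * (12 * A.trace) := by
          rw [← Finset.mul_sum, ← Finset.mul_sum, htr]
      _ ≤ (12*lam)^(p-1) * ((12*lam) * (2 * A.trace / lam)) := by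
          refine mul_le_mul_of_nonneg_left ?_ (Real.rpow_nonneg (by linarith) _)
          have h24 : (12*lam) * (2*A.trace/lam) = 24 * A.trace := by
            field_simp
            ring
          rw [h24]
          linarith
      _ = (12*lam) ^ p * (2 * A.trace / lam) := by
          rw [← mul_assoc]
          congr 1
          calc (12*lam)^(p-1) * (12*lam) = (12*lam)^(p-1) * (12*lam)^(1:ℝ) := by
                rw [Real.rpow_one]
            _ = (12*lam)^((p-1)+1) := (Real.rpow_add (by linarith) _ _).symm
            _ = (12*lam)^p := by ring_nf
  have dnorm : (∑ i, (12 * lam * g i) ^ p) ^ (1/p) ≤ 12 * lam * (2 * A.trace / lam) ^ (1/p) := by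
    have h1 : ((12*lam)^p * (2*A.trace/lam)) ^ (1/p) = 12*lam*(2*A.trace/lam)^(1/p) := by
      rw [Real.mul_rpow (Real.rpow_nonneg (by linarith) _) htrnn]
      congr 1
      rw [← Real.rpow_mul (by linarith : (0:ℝ) ≤ 12*lam), mul_one_div, div_self (ne_of_gt hp0),
        Real.rpow_one]
    calc (∑ i, (12 * lam * g i) ^ p) ^ (1/p)
        ≤ ((12*lam)^p * (2*A.trace/lam)) ^ (1/p) :=
          Real.rpow_le_rpow (Finset.sum_nonneg fun i _ => Real.rpow_nonneg (hddnn i) _)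
            dsum hpinv
      _ = 12*lam*(2*A.trace/lam)^(1/p) := h1
  calc (∑ i, |hA'psd.1.eigenvalues i| ^ p) ^ (1/p)
      ≤ (∑ i, (ev i + 12 * lam * g i) ^ p) ^ (1/p) := step1
    _ ≤ (∑ i, ev i ^ p) ^ (1/p) + (∑ i, (12 * lam * g i) ^ p) ^ (1/p) := mink
    _ ≤ (∑ i, |ev i| ^ p) ^ (1/p) + 12 * lam * (2 * A.trace / lam) ^ (1/p) := by
        rw [← eA]
        exact add_le_add le_rfl dnorm
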